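/- Let ρ ∈ R_c, let D_ρ be the set of all (v, w) ∈ [0, ∞)² with Φ_ρ(v) + w < Φ_ρ(∞), and let Ψ_ρ : D_ρ → [0, ∞) be defined by Ψ_ρ(v, w) = Φ_ρ^{−1}(Φ_ρ(v) + w) (with Φ_ρ^{−1} extended to the closure of the range of Φ_ρ by its one-sided limits, in particular Φ_ρ^{−1}(Φ_ρ(0)) := 0). Then Ψ_ρ is continuous on D_ρ, nondecreasing in each coordinate, and locally Lipschitz continuous on D_ρ ∩ ((0, ∞) × [0, ∞)). -/

import Mathlib

open MeasureTheory Filter Set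

/-- `Φ_ρ(w) = ∫_1^w 1/ρ(v) dv` for `ρ ∈ R_c`. -/
noncomputable def Phi (ρ : ℝ → ℝ) (w : ℝ) : ℝ := ∫ v in (1:ℝ)..w, 1 / ρ v

/-- `Φ_ρ(0) = lim_{v↓0} Φ_ρ(v) ∈ [-∞, ∞)`, realised as an infimum in `EReal`
(by strict monotonicity of `Φ_ρ` this is the one-sided limit). -/
noncomputable def Phi0 (ρ : ℝ → ℝ) : EReal :=
  sInf ((fun u => ((Phi ρ u : ℝ) : EReal)) '' Set.Ioi (0:ℝ))

/-- `Φ_ρ(∞) = lim_{v↑∞} Φ_ρ(v) ∈ (-∞, ∞]`, realised as a supremum in `EReal`. -/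
noncomputable def PhiInfty (ρ : ℝ → ℝ) : EReal :=
  sSup ((fun u => ((Phi ρ u : ℝ) : EReal)) '' Set.Ioi (0:ℝ))

/-- The `EReal`-valued extension of `Φ_ρ` to `[0,∞)`. -/
noncomputable def PhiE (ρ : ℝ → ℝ) (v : ℝ) : EReal :=
  if v = 0 then Phi0 ρ else ((Phi ρ v : ℝ) : EReal)

/-- `D_ρ`, the set of all `(v,w) ∈ [0,∞)²` with `Φ_ρ(v) + w < Φ_ρ(∞)`. -/
def Drho (ρ : ℝ → ℝ) : Set (ℝ × ℝ) :=
  {q | 0 ≤ q.1 ∧ 0 ≤ q.2 ∧ PhiE ρ q.1 + (q.2 : EReal) < PhiInfty ρ}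

/-- `Ψ_ρ(v,w) = Φ_ρ⁻¹(Φ_ρ(v) + w)`, where `Φ_ρ⁻¹` is extended to the closure of the
range of `Φ_ρ` by its one-sided limits (in particular `Φ_ρ⁻¹(Φ_ρ(0)) = 0`); this
extension is realised as `sup {u > 0 | Φ_ρ(u) ≤ Φ_ρ(v) + w}` (with `sup ∅ = 0`). -/
noncomputable def Psi (ρ : ℝ → ℝ) (v w : ℝ) : ℝ :=
  sSup {u : ℝ | 0 < u ∧ ((Phi ρ u : ℝ) : EReal) ≤ PhiE ρ v + (w : EReal)}

lemma PhiE_zero (ρ : ℝ → ℝ) : PhiE ρ 0 = Phi0 ρ := if_pos rfl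

lemma PhiE_ne_top (ρ : ℝ → ℝ) {v : ℝ} : PhiE ρ v ≠ ⊤ := by
  unfold PhiE
  split
  · exact ne_top_of_le_ne_top (by simp) (sInf_le ⟨1, by simp, rfl⟩)
  · simp

section aux
variable {ρ : ℝ → ℝ} (hρc : ContinuousOn ρ (Set.Ici 0))
  (hρpos : ∀ v > (0:ℝ), 0 < ρ v)

include hρc hρpos

lemma contOn_inv : ContinuousOn (fun v => 1 / ρ v) (Ioi 0) := by
  apply ContinuousOn.div continuousOn_const (hρc.mono (Ioi_subset_Ici le_rfl))
  exact fun x hx => (hρpos x hx).ne'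

lemma integrable_inv {a b : ℝ} (ha : 0 < a) (hb : 0 < b) :
    IntervalIntegrable (fun v => 1 / ρ v) volume a b := by
  apply ((contOn_inv hρc hρpos).mono _).intervalIntegrable
  rw [uIcc_eq_union]
  rintro x (hx | hx) <;> exact lt_of_lt_of_le (by positivity) hx.1

lemma Phi_sub {a b : ℝ} (ha : 0 < a) (hb : 0 < b) :
    Phi ρ b - Phi ρ a = ∫ v in a..b, 1 / ρ v :=
  intervalIntegral.integral_interval_sub_left
    (integrable_inv hρc hρpos one_pos hb) (integrable_inv hρc hρpos one_pos ha)

lemma Phi_strictMono {a b : ℝ} (ha : 0 < a) (hab : a < b) : Phi ρ a < Phi ρ b := by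
  have h := intervalIntegral.intervalIntegral_pos_of_pos_on
    (integrable_inv hρc hρpos ha (ha.trans hab))
    (fun x hx => by
      have hx0 : 0 < x := ha.trans hx.1
      have := hρpos x hx0
      positivity) hab
  have := Phi_sub hρc hρpos ha (ha.trans hab)
  linarith

lemma Phi_mono {a b : ℝ} (ha : 0 < a) (hab : a ≤ b) : Phi ρ a ≤ Phi ρ b := by
  rcases eq_or_lt_of_le hab with rfl | h
  · exact le_rfl
  · exact (Phi_strictMono hρc hρpos ha h).le

lemma Phi_lt_of_lt {a b : ℝ} (ha : 0 < a) (hb : 0 < b) (h : Phi ρ a < Phi ρ b) : a < b := by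
  by_contra hab
  exact absurd (Phi_mono hρc hρpos hb (not_lt.1 hab)) (not_le.2 h)

lemma Phi_le_of_le {a b : ℝ} (ha : 0 < a) (hb : 0 < b) (h : Phi ρ a ≤ Phi ρ b) : a ≤ b := by
  by_contra hab
  exact absurd (Phi_strictMono hρc hρpos hb (not_le.1 hab)) (not_lt.2 h)

/-- two-sided Lipschitz bounds on a compact interval -/
lemma Phi_bounds {m M : ℝ} (hm : 0 < m) (hmM : m ≤ M) :
    ∃ k K : ℝ, 0 < k ∧ 0 < K ∧ ∀ a b : ℝ, a ∈ Icc m M → b ∈ Icc m M → a ≤ b →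
      k * (b - a) ≤ Phi ρ b - Phi ρ a ∧ Phi ρ b - Phi ρ a ≤ K * (b - a) := by
  have hsub : Icc m M ⊆ Ioi 0 := fun x hx => lt_of_lt_of_le hm hx.1
  have hcont : ContinuousOn (fun v => 1 / ρ v) (Icc m M) := (contOn_inv hρc hρpos).mono hsub
  obtain ⟨xm, hxm, hxmin⟩ := (isCompact_Icc).exists_isMinOn ⟨m, left_mem_Icc.2 hmM⟩ hcont
  obtain ⟨xM, hxM, hxmax⟩ := (isCompact_Icc).exists_isMaxOn ⟨m, left_mem_Icc.2 hmM⟩ hcont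
  have hxm0 : 0 < xm := hsub hxm
  have hxM0 : 0 < xM := hsub hxM
  refine ⟨1 / ρ xm, 1 / ρ xM, by have := hρpos xm hxm0; positivity,
    by have := hρpos xM hxM0; positivity, fun a b ha hb hab => ?_⟩
  have ha0 : 0 < a := hsub ha
  have hb0 : 0 < b := hsub hb
  have hIcc : Icc a b ⊆ Icc m M := Icc_subset_Icc ha.1 hb.2
  have hint : IntervalIntegrable (fun v => 1 / ρ v) volume a b := integrable_inv hρc hρpos ha0 hb0
  have hintc : ∀ c : ℝ, IntervalIntegrable (fun _ => c) volume a b := fun c =>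
    intervalIntegrable_const
  rw [Phi_sub hρc hρpos ha0 hb0]
  constructor
  · have := intervalIntegral.integral_mono_on hab (hintc (1 / ρ xm)) hint
      (fun x hx => hxmin (hIcc hx))
    simpa [mul_comm] using this
  · have := intervalIntegral.integral_mono_on hab hint (hintc (1 / ρ xM))
      (fun x hx => hxmax (hIcc hx))
    simpa [mul_comm] using this

lemma Phi_continuousAt {x : ℝ} (hx : 0 < x) : ContinuousAt (Phi ρ) x := by
  obtain ⟨k, K, hk, hK, hb⟩ := Phi_bounds hρc hρpos (half_pos hx) (by linarith : x/2 ≤ x + 1)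
  have hlip : LipschitzOnWith ⟨K, hK.le⟩ (Phi ρ) (Icc (x/2) (x+1)) := by
    apply LipschitzOnWith.of_dist_le_mul
    intro a ha b hbb
    rcases le_total a b with h | h
    · have h1 := (hb a b ha hbb h).1
      have h2 := (hb a b ha hbb h).2
      have h3 : 0 ≤ k * (b - a) := mul_nonneg hk.le (by linarith)
      rw [Real.dist_eq, Real.dist_eq, abs_of_nonpos (by linarith), abs_of_nonpos (by linarith)]
      show _ ≤ K * _; linarith
    · have h1 := (hb b a hbb ha h).1
      have h2 := (hb b a hbb ha h).2
      have h3 : 0 ≤ k * (a - b) := mul_nonneg hk.le (by linarith)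
      rw [Real.dist_eq, Real.dist_eq, abs_of_nonneg (by linarith), abs_of_nonneg (by linarith)]
      show _ ≤ K * _; linarith
  exact hlip.continuousOn.continuousAt (Icc_mem_nhds (by linarith) (by linarith))


lemma Phi0_lt {u : ℝ} (hu : 0 < u) : Phi0 ρ < ((Phi ρ u : ℝ) : EReal) := by
  have h1 : Phi0 ρ ≤ ((Phi ρ (u/2) : ℝ) : EReal) := sInf_le ⟨u/2, half_pos hu, rfl⟩
  refine lt_of_le_of_lt h1 ?_
  exact_mod_cast Phi_strictMono hρc hρpos (half_pos hu) (by linarith)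

lemma lt_PhiInfty {u : ℝ} (hu : 0 < u) : ((Phi ρ u : ℝ) : EReal) < PhiInfty ρ := by
  have h1 : ((Phi ρ (u+1) : ℝ) : EReal) ≤ PhiInfty ρ :=
    le_sSup ⟨u+1, by simp; linarith, rfl⟩
  refine lt_of_lt_of_le ?_ h1
  exact_mod_cast Phi_strictMono hρc hρpos hu (by linarith)

lemma Phi0_le_PhiE {v : ℝ} (hv : 0 ≤ v) : Phi0 ρ ≤ PhiE ρ v := by
  unfold PhiE
  split
  · exact le_rfl
  · exact (Phi0_lt hρc hρpos (lt_of_le_of_ne hv (Ne.symm (by assumption)))).le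

lemma PhiE_mono {a b : ℝ} (ha : 0 ≤ a) (hab : a ≤ b) : PhiE ρ a ≤ PhiE ρ b := by
  rcases eq_or_lt_of_le ha with rfl | ha'
  · rw [PhiE_zero]; exact Phi0_le_PhiE hρc hρpos (le_trans ha hab)
  · unfold PhiE
    rw [if_neg ha'.ne', if_neg (lt_of_lt_of_le ha' hab).ne']
    exact_mod_cast Phi_mono hρc hρpos ha' hab

lemma Phi_surj {r : ℝ} (h0 : Phi0 ρ < (r : EReal)) (hB : (r : EReal) < PhiInfty ρ) :
    ∃ t, 0 < t ∧ Phi ρ t = r := by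
  obtain ⟨x, ⟨a, ha, rfl⟩, hx⟩ := sInf_lt_iff.1 h0
  obtain ⟨y, ⟨b, hb, rfl⟩, hy⟩ := lt_sSup_iff.1 hB
  simp only [mem_Ioi] at ha hb
  rw [EReal.coe_lt_coe_iff] at hx hy
  have hab : a < b := Phi_lt_of_lt hρc hρpos ha hb (hx.trans hy)
  obtain ⟨t, ht, htr⟩ := intermediate_value_Icc hab.le
    (fun x hx => (Phi_continuousAt hρc hρpos (lt_of_lt_of_le ha hx.1)).continuousWithinAt)
    ⟨hx.le, hy.le⟩
  exact ⟨t, lt_of_lt_of_le ha ht.1, htr⟩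

lemma bddAbove_S {v w : ℝ} (hlt : PhiE ρ v + (w : EReal) < PhiInfty ρ) :
    BddAbove {u : ℝ | 0 < u ∧ ((Phi ρ u : ℝ) : EReal) ≤ PhiE ρ v + (w : EReal)} := by
  obtain ⟨x, ⟨b, hb, rfl⟩, hx⟩ := lt_sSup_iff.1 hlt
  simp only [mem_Ioi] at hb
  refine ⟨b, fun u hu => ?_⟩
  have : ((Phi ρ u : ℝ) : EReal) ≤ ((Phi ρ b : ℝ) : EReal) := le_of_lt (lt_of_le_of_lt hu.2 hx)
  exact Phi_le_of_le hρc hρpos hu.1 hb (by exact_mod_cast this)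

lemma Psi_nonneg (v w : ℝ) : 0 ≤ Psi ρ v w :=
  Real.sSup_nonneg (fun x hx => hx.1.le)

/-- If the target value exceeds `Phi0`, `Psi` is the genuine inverse. -/
lemma Psi_spec {v w : ℝ} (hlt : PhiE ρ v + (w : EReal) < PhiInfty ρ)
    (hy : Phi0 ρ < PhiE ρ v + (w : EReal)) :
    0 < Psi ρ v w ∧ ((Phi ρ (Psi ρ v w) : ℝ) : EReal) = PhiE ρ v + (w : EReal) := by
  set y := PhiE ρ v + (w : EReal) with hydef
  have hytop : y ≠ ⊤ := (lt_of_lt_of_le hlt le_top).ne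
  have hybot : y ≠ ⊥ := fun h => by simp [h] at hy
  set r := y.toReal with hr
  have hyr : y = (r : EReal) := (EReal.coe_toReal hytop hybot).symm
  obtain ⟨t, ht, htr⟩ := Phi_surj hρc hρpos (hyr ▸ hy) (hyr ▸ hlt)
  have hS : {u : ℝ | 0 < u ∧ ((Phi ρ u : ℝ) : EReal) ≤ y} = Ioc 0 t := by
    ext u
    simp only [mem_setOf_eq, mem_Ioc, hyr, EReal.coe_le_coe_iff, ← htr]
    exact and_congr_right fun hu =>
      ⟨fun h => Phi_le_of_le hρc hρpos hu ht h, fun h => Phi_mono hρc hρpos hu h⟩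
  have : Psi ρ v w = t := by
    rw [Psi, ← hydef, hS, csSup_Ioc ht]
  rw [this, htr, ← hyr]
  exact ⟨ht, rfl⟩

lemma Psi_eq_zero {v w : ℝ} (hy : PhiE ρ v + (w : EReal) ≤ Phi0 ρ) : Psi ρ v w = 0 := by
  have hS : {u : ℝ | 0 < u ∧ ((Phi ρ u : ℝ) : EReal) ≤ PhiE ρ v + (w : EReal)} = ∅ := by
    ext u
    simp only [mem_setOf_eq, mem_empty_iff_false, iff_false, not_and]
    intro hu h
    exact absurd (le_trans h hy) (not_le.2 (Phi0_lt hρc hρpos hu))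
  rw [Psi, hS, Real.sSup_empty]

lemma self_le_Psi {v w : ℝ} (hv : 0 < v) (hw : 0 ≤ w)
    (hlt : PhiE ρ v + (w : EReal) < PhiInfty ρ) : v ≤ Psi ρ v w := by
  refine le_csSup (bddAbove_S hρc hρpos hlt) ⟨hv, ?_⟩
  rw [PhiE, if_neg hv.ne']
  simpa using add_le_add_right (by exact_mod_cast hw : (0:EReal) ≤ (w:EReal)) _

lemma Psi_le {v w c : ℝ} (hc : 0 < c)
    (h : PhiE ρ v + (w : EReal) < ((Phi ρ c : ℝ) : EReal)) : Psi ρ v w ≤ c := by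
  refine Real.sSup_le (fun u hu => ?_) hc.le
  have : ((Phi ρ u : ℝ) : EReal) < ((Phi ρ c : ℝ) : EReal) := lt_of_le_of_lt hu.2 h
  exact (Phi_lt_of_lt hρc hρpos hu.1 hc (by exact_mod_cast this)).le

lemma Psi_monoOn : ∀ q ∈ Drho ρ, ∀ r ∈ Drho ρ, q.1 ≤ r.1 → q.2 ≤ r.2 →
    Psi ρ q.1 q.2 ≤ Psi ρ r.1 r.2 := by
  rintro ⟨v, w⟩ ⟨hv, hw, hlt⟩ ⟨v', w'⟩ ⟨hv', hw', hlt'⟩ h1 h2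
  simp only at *
  have hsub : {u : ℝ | 0 < u ∧ ((Phi ρ u : ℝ) : EReal) ≤ PhiE ρ v + (w : EReal)} ⊆
      {u : ℝ | 0 < u ∧ ((Phi ρ u : ℝ) : EReal) ≤ PhiE ρ v' + (w' : EReal)} := by
    rintro u ⟨hu, hle⟩
    exact ⟨hu, hle.trans (add_le_add (PhiE_mono hρc hρpos hv h1) (by exact_mod_cast h2))⟩
  rcases eq_empty_or_nonempty
      {u : ℝ | 0 < u ∧ ((Phi ρ u : ℝ) : EReal) ≤ PhiE ρ v + (w : EReal)} with h | h
  · rw [Psi, h, Real.sSup_empty]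
    exact Psi_nonneg hρc hρpos v' w'
  · exact csSup_le_csSup (bddAbove_S hρc hρpos hlt') h hsub

/-- eventually, the target value stays below `Phi ρ c`. -/
lemma eventually_lt_Phi {v0 w0 c : ℝ} (hq : (v0, w0) ∈ Drho ρ)
    (h : PhiE ρ v0 + (w0 : EReal) < ((Phi ρ c : ℝ) : EReal)) :
    ∀ᶠ q in nhdsWithin (v0, w0) (Drho ρ),
      PhiE ρ q.1 + (q.2 : EReal) < ((Phi ρ c : ℝ) : EReal) := by
  obtain ⟨hv0, hw0, _⟩ := hq
  simp only at hv0 hw0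
  rcases eq_or_lt_of_le hv0 with hv00 | hv0pos
  · -- v0 = 0
    rw [← hv00, PhiE_zero] at h
    have h0 : Phi0 ρ < ((Phi ρ c - w0 : ℝ) : EReal) := by
      rcases eq_or_ne (Phi0 ρ) ⊥ with hb | hb
      · rw [hb]; exact EReal.bot_lt_coe _
      · have ht : Phi0 ρ ≠ ⊤ := by rw [← PhiE_zero ρ]; exact PhiE_ne_top ρ
        obtain ⟨p, hp⟩ : ∃ p : ℝ, Phi0 ρ = (p : EReal) :=
          ⟨(Phi0 ρ).toReal, (EReal.coe_toReal ht hb).symm⟩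
        rw [hp] at h ⊢
        have : p + w0 < Phi ρ c := by exact_mod_cast h
        exact_mod_cast by linarith
    obtain ⟨x, ⟨δ, hδ, rfl⟩, hx⟩ := sInf_lt_iff.1 h0
    simp only [mem_Ioi] at hδ
    rw [EReal.coe_lt_coe_iff] at hx
    set η := (Phi ρ c - w0 - Phi ρ δ) / 2 with hη
    have hηpos : 0 < η := by rw [hη]; linarith
    have hU : IsOpen {q : ℝ × ℝ | q.1 < δ ∧ q.2 < w0 + η} :=
      (isOpen_lt continuous_fst continuous_const).inter
        (isOpen_lt continuous_snd continuous_const)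
    have hq0U : ((v0, w0) : ℝ × ℝ) ∈ {q : ℝ × ℝ | q.1 < δ ∧ q.2 < w0 + η} := by
      constructor
      · simpa [← hv00] using hδ
      · simp; linarith
    filter_upwards [(hU.eventually_mem hq0U).filter_mono nhdsWithin_le_nhds,
      eventually_mem_nhdsWithin] with q hqU hqD
    obtain ⟨hq1, hq2⟩ := hqU
    obtain ⟨hq1', hq2', _⟩ := hqD
    have hPhiEq : PhiE ρ q.1 ≤ ((Phi ρ δ : ℝ) : EReal) := by
      rcases eq_or_lt_of_le hq1' with h1 | h1
      · rw [← h1, PhiE_zero]; exact sInf_le ⟨δ, hδ, rfl⟩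
      · rw [PhiE, if_neg h1.ne']
        exact_mod_cast Phi_mono hρc hρpos h1 hq1.le
    calc PhiE ρ q.1 + (q.2 : EReal) ≤ ((Phi ρ δ : ℝ) : EReal) + (q.2 : EReal) :=
          add_le_add_left hPhiEq _
      _ = ((Phi ρ δ + q.2 : ℝ) : EReal) := by rw [EReal.coe_add]
      _ < ((Phi ρ c : ℝ) : EReal) := by
          rw [EReal.coe_lt_coe_iff]; linarith [hq2, hx]
  · -- v0 > 0
    have hPhiE0 : PhiE ρ v0 = ((Phi ρ v0 : ℝ) : EReal) := if_neg hv0pos.ne'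
    rw [hPhiE0] at h
    have hreal : Phi ρ v0 + w0 < Phi ρ c := by exact_mod_cast h
    have hcont : ContinuousAt (fun q : ℝ × ℝ => Phi ρ q.1 + q.2) (v0, w0) :=
      by have hc := (Phi_continuousAt hρc hρpos hv0pos).comp (continuousAt_fst (p := ((v0, w0) : ℝ × ℝ)))
         exact hc.add continuousAt_snd
    have h1 : ∀ᶠ q : ℝ × ℝ in nhds (v0, w0), Phi ρ q.1 + q.2 < Phi ρ c :=
      hcont.eventually_lt_const hreal
    have h2 : ∀ᶠ q : ℝ × ℝ in nhds (v0, w0), 0 < q.1 :=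
      ((isOpen_lt continuous_const continuous_fst).eventually_mem (by simpa using hv0pos))
    filter_upwards [h1.filter_mono nhdsWithin_le_nhds, h2.filter_mono nhdsWithin_le_nhds]
      with q hq1 hq2
    rw [PhiE, if_neg hq2.ne']
    exact_mod_cast hq1

/-- eventually, the target value stays above `Phi ρ c`. -/
lemma eventually_Phi_le {v0 w0 c : ℝ} (hq : (v0, w0) ∈ Drho ρ)
    (h : ((Phi ρ c : ℝ) : EReal) < PhiE ρ v0 + (w0 : EReal)) :
    ∀ᶠ q in nhdsWithin (v0, w0) (Drho ρ),
      ((Phi ρ c : ℝ) : EReal) ≤ PhiE ρ q.1 + (q.2 : EReal) := by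
  obtain ⟨hv0, hw0, _⟩ := hq
  simp only at hv0 hw0
  rcases eq_or_lt_of_le hv0 with hv00 | hv0pos
  · rw [← hv00, PhiE_zero] at h
    have hb : Phi0 ρ ≠ ⊥ := by
      intro hb; rw [hb] at h; simp at h
    have ht : Phi0 ρ ≠ ⊤ := by rw [← PhiE_zero ρ]; exact PhiE_ne_top ρ
    obtain ⟨p, hp⟩ : ∃ p : ℝ, Phi0 ρ = (p : EReal) :=
      ⟨(Phi0 ρ).toReal, (EReal.coe_toReal ht hb).symm⟩
    rw [hp] at h
    have hreal : Phi ρ c < p + w0 := by exact_mod_cast h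
    set η := p + w0 - Phi ρ c with hη
    have hηpos : 0 < η := by rw [hη]; linarith
    have hU : IsOpen {q : ℝ × ℝ | w0 - η < q.2} := isOpen_lt continuous_const continuous_snd
    have hq0U : ((v0, w0) : ℝ × ℝ) ∈ {q : ℝ × ℝ | w0 - η < q.2} := by simp; linarith
    filter_upwards [(hU.eventually_mem hq0U).filter_mono nhdsWithin_le_nhds,
      eventually_mem_nhdsWithin] with q hqU hqD
    obtain ⟨hq1', hq2', _⟩ := hqD
    have h1 : ((p : ℝ) : EReal) ≤ PhiE ρ q.1 := hp ▸ Phi0_le_PhiE hρc hρpos hq1'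
    calc ((Phi ρ c : ℝ) : EReal) ≤ ((p + (w0 - η) : ℝ) : EReal) := by
          rw [EReal.coe_le_coe_iff]; rw [hη]; linarith
      _ ≤ ((p : ℝ) : EReal) + (q.2 : EReal) := by
          rw [EReal.coe_add]
          exact add_le_add_right (by exact_mod_cast hqU.le) _
      _ ≤ PhiE ρ q.1 + (q.2 : EReal) := add_le_add_left h1 _
  · have hPhiE0 : PhiE ρ v0 = ((Phi ρ v0 : ℝ) : EReal) := if_neg hv0pos.ne'
    rw [hPhiE0] at h
    have hreal : Phi ρ c < Phi ρ v0 + w0 := by exact_mod_cast h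
    have hcont : ContinuousAt (fun q : ℝ × ℝ => Phi ρ q.1 + q.2) (v0, w0) :=
      by have hc := (Phi_continuousAt hρc hρpos hv0pos).comp (continuousAt_fst (p := ((v0, w0) : ℝ × ℝ)))
         exact hc.add continuousAt_snd
    have h1 : ∀ᶠ q : ℝ × ℝ in nhds (v0, w0), Phi ρ c < Phi ρ q.1 + q.2 :=
      hcont.eventually_const_lt hreal
    have h2 : ∀ᶠ q : ℝ × ℝ in nhds (v0, w0), 0 < q.1 :=
      ((isOpen_lt continuous_const continuous_fst).eventually_mem (by simpa using hv0pos))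
    filter_upwards [h1.filter_mono nhdsWithin_le_nhds, h2.filter_mono nhdsWithin_le_nhds]
      with q hq1 hq2
    rw [PhiE, if_neg hq2.ne']
    exact_mod_cast hq1.le

lemma Psi_continuousOn : ContinuousOn (fun q : ℝ × ℝ => Psi ρ q.1 q.2) (Drho ρ) := by
  rintro ⟨v0, w0⟩ hq
  obtain ⟨hv0, hw0, hlt0⟩ := hq
  simp only at hv0 hw0 hlt0
  rw [ContinuousWithinAt, tendsto_order]
  constructor
  · intro a ha
    rcases lt_or_ge a 0 with ha0 | ha0
    · exact Filter.Eventually.of_forall fun q => lt_of_lt_of_le ha0 (Psi_nonneg hρc hρpos q.1 q.2)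
    · have ht0pos : 0 < Psi ρ v0 w0 := lt_of_le_of_lt ha0 ha
      have hy0 : Phi0 ρ < PhiE ρ v0 + (w0 : EReal) := by
        by_contra hcon
        rw [Psi_eq_zero hρc hρpos (not_lt.1 hcon)] at ht0pos
        exact lt_irrefl 0 ht0pos
      obtain ⟨ht0', hPhiPsi⟩ := Psi_spec hρc hρpos hlt0 hy0
      set c := (a + Psi ρ v0 w0) / 2 with hc
      have hc0 : 0 < c := by rw [hc]; linarith
      have hct : c < Psi ρ v0 w0 := by rw [hc]; linarith
      have hac : a < c := by rw [hc]; linarith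
      have hcc : ((Phi ρ c : ℝ) : EReal) < PhiE ρ v0 + (w0 : EReal) := by
        rw [← hPhiPsi]
        exact_mod_cast Phi_strictMono hρc hρpos hc0 hct
      filter_upwards [eventually_Phi_le hρc hρpos ⟨hv0, hw0, hlt0⟩ hcc, eventually_mem_nhdsWithin]
        with q hq1 hqD
      have : c ≤ Psi ρ q.1 q.2 := le_csSup (bddAbove_S hρc hρpos hqD.2.2) ⟨hc0, hq1⟩
      linarith
  · intro b hb
    have hb0 : 0 < b := lt_of_le_of_lt (Psi_nonneg hρc hρpos v0 w0) hb
    set c := (Psi ρ v0 w0 + b) / 2 with hc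
    have hc0 : 0 < c := by
      have := Psi_nonneg hρc hρpos v0 w0; rw [hc]; linarith
    have hct : Psi ρ v0 w0 < c := by rw [hc]; linarith
    have hcb : c < b := by rw [hc]; linarith
    have hcc : PhiE ρ v0 + (w0 : EReal) < ((Phi ρ c : ℝ) : EReal) := by
      rcases le_or_gt (PhiE ρ v0 + (w0 : EReal)) (Phi0 ρ) with hy | hy
      · exact lt_of_le_of_lt hy (Phi0_lt hρc hρpos hc0)
      · obtain ⟨ht0', hPhiPsi⟩ := Psi_spec hρc hρpos hlt0 hy
        rw [← hPhiPsi]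
        exact_mod_cast Phi_strictMono hρc hρpos ht0' hct
    filter_upwards [eventually_lt_Phi hρc hρpos ⟨hv0, hw0, hlt0⟩ hcc] with q hq1
    exact lt_of_le_of_lt (Psi_le hρc hρpos hc0 hq1) hcb


lemma Psi_locallyLipschitzOn :
    LocallyLipschitzOn (Drho ρ ∩ Set.Ioi (0:ℝ) ×ˢ Set.Ici (0:ℝ))
      (fun q : ℝ × ℝ => Psi ρ q.1 q.2) := by
  rintro ⟨v0, w0⟩ ⟨⟨hv0', hw0, hlt0⟩, hv0, -⟩
  simp only at hv0' hw0 hlt0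
  replace hv0 : 0 < v0 := hv0
  -- pick u1 with y0 < Φ u1
  obtain ⟨x, ⟨u1, hu1, rfl⟩, hx⟩ := lt_sSup_iff.1 hlt0
  simp only [mem_Ioi] at hu1
  simp only at hx
  have hPhiE0 : PhiE ρ v0 = ((Phi ρ v0 : ℝ) : EReal) := if_neg hv0.ne'
  have hy0lt : Phi ρ v0 + w0 < Phi ρ u1 := by
    rw [hPhiE0, ← EReal.coe_add] at hx; exact_mod_cast hx
  set ε := (Phi ρ u1 - (Phi ρ v0 + w0)) / 2 with hε
  have hεpos : 0 < ε := by rw [hε]; linarith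
  -- continuity of Phi at v0
  obtain ⟨δ0, hδ0pos, hδ0⟩ := Metric.continuousAt_iff.1 (Phi_continuousAt hρc hρpos hv0) ε hεpos
  set δ := min (min δ0 (v0 / 2)) (ε / 2) with hδdef
  have hδpos : 0 < δ := by
    apply lt_min (lt_min hδ0pos (by linarith)) (by linarith)
  have hδv0 : δ ≤ v0 / 2 := le_trans (min_le_left _ _) (min_le_right _ _)
  have hδδ0 : δ ≤ δ0 := le_trans (min_le_left _ _) (min_le_left _ _)
  have hδε : δ ≤ ε / 2 := min_le_right _ _
  set m := v0 / 2 with hm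
  set M := max u1 (v0 + v0/2) with hM
  have hm0 : 0 < m := by rw [hm]; linarith
  have hv0u1 : v0 < u1 := by
    refine Phi_lt_of_lt hρc hρpos hv0 hu1 (by linarith)
  have hmM : m ≤ M := le_trans (by rw [hm]; linarith) (le_max_right _ _)
  obtain ⟨k, K, hk, hK, hbd⟩ := Phi_bounds hρc hρpos hm0 hmM
  -- facts about points in the neighbourhood
  set T : Set (ℝ × ℝ) := (Drho ρ ∩ Set.Ioi (0:ℝ) ×ˢ Set.Ici (0:ℝ)) ∩ Metric.ball (v0, w0) δ
    with hT
  have hfact : ∀ q ∈ T, q.1 ∈ Icc m M ∧ Psi ρ q.1 q.2 ∈ Icc m M ∧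
      Phi ρ (Psi ρ q.1 q.2) = Phi ρ q.1 + q.2 := by
    rintro ⟨v, w⟩ ⟨⟨⟨-, hw, hlt⟩, hv, -⟩, hball⟩
    simp only at hw hlt
    replace hv : 0 < v := hv
    rw [Metric.mem_ball, Prod.dist_eq] at hball
    have hdv : |v - v0| < δ := by
      have := lt_of_le_of_lt (le_max_left _ _) hball
      rwa [Real.dist_eq] at this
    have hdw : |w - w0| < δ := by
      have := lt_of_le_of_lt (le_max_right _ _) hball
      rwa [Real.dist_eq] at this
    have hvm : m ≤ v := by
      rw [hm]; rw [abs_lt] at hdv; linarith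
    have hvM : v ≤ M := by
      refine le_trans ?_ (le_max_right _ _)
      rw [abs_lt] at hdv; linarith
    have hΦv : |Phi ρ v - Phi ρ v0| < ε := by
      have := hδ0 (show dist v v0 < δ0 by rw [Real.dist_eq]; exact lt_of_lt_of_le hdv hδδ0)
      rwa [Real.dist_eq] at this
    have hkey : Phi ρ v + w < Phi ρ u1 := by
      rw [abs_lt] at hΦv hdw
      have : ε ≤ Phi ρ u1 - (Phi ρ v0 + w0) := by rw [hε]; linarith
      linarith
    have hPhiEv : PhiE ρ v = ((Phi ρ v : ℝ) : EReal) := if_neg hv.ne'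
    have hy : Phi0 ρ < PhiE ρ v + (w : EReal) := by
      rw [hPhiEv, ← EReal.coe_add]
      refine lt_of_lt_of_le (Phi0_lt hρc hρpos hv) ?_
      exact_mod_cast by linarith
    obtain ⟨hΨpos, hΨeq⟩ := Psi_spec hρc hρpos hlt hy
    rw [hPhiEv, ← EReal.coe_add, EReal.coe_eq_coe_iff] at hΨeq
    refine ⟨⟨hvm, hvM⟩, ⟨?_, ?_⟩, hΨeq⟩
    · refine le_trans hvm (Phi_le_of_le hρc hρpos hv hΨpos (by rw [hΨeq]; linarith))
    · refine le_trans (Phi_le_of_le hρc hρpos hΨpos hu1 (by rw [hΨeq]; linarith)) (le_max_left _ _)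
  -- the Lipschitz estimate
  have hC : (0:ℝ) ≤ (K + 1) / k := by positivity
  refine ⟨⟨(K + 1) / k, hC⟩, T, inter_mem_nhdsWithin _ (Metric.ball_mem_nhds _ hδpos), ?_⟩
  apply LipschitzOnWith.of_dist_le_mul
  intro q hqT q' hq'T
  have key : ∀ r ∈ T, ∀ r' ∈ T, Psi ρ (r : ℝ × ℝ).1 r.2 - Psi ρ (r' : ℝ × ℝ).1 r'.2 ≤
      (K + 1) / k * dist r r' := by
    rintro r hr r' hr'
    obtain ⟨hr1, hrΨ, hreq⟩ := hfact r hr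
    obtain ⟨hr1', hrΨ', hreq'⟩ := hfact r' hr'
    rcases le_total (Psi ρ r.1 r.2) (Psi ρ r'.1 r'.2) with h | h
    · refine le_trans (by linarith) (mul_nonneg hC dist_nonneg)
    · have h1 : k * (Psi ρ r.1 r.2 - Psi ρ r'.1 r'.2) ≤
          Phi ρ (Psi ρ r.1 r.2) - Phi ρ (Psi ρ r'.1 r'.2) := (hbd _ _ hrΨ' hrΨ h).1
      have h2 : Phi ρ r.1 - Phi ρ r'.1 ≤ K * |r.1 - r'.1| := by
        rcases le_total r.1 r'.1 with hh | hh
        · have := (hbd _ _ hr1 hr1' hh).1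
          have hknn : 0 ≤ k * (r'.1 - r.1) := mul_nonneg hk.le (by linarith)
          have habs : 0 ≤ |r.1 - r'.1| := abs_nonneg _
          nlinarith
        · have := (hbd _ _ hr1' hr1 hh).2
          rw [abs_of_nonneg (by linarith)]
          linarith
      have h3 : r.2 - r'.2 ≤ |r.2 - r'.2| := le_abs_self _
      have h4 : |r.1 - r'.1| ≤ dist r r' := by
        rw [Prod.dist_eq, ← Real.dist_eq]; exact le_max_left _ _
      have h5 : |r.2 - r'.2| ≤ dist r r' := by
        rw [Prod.dist_eq, ← Real.dist_eq]; exact le_max_right _ _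
      have hd : k * (Psi ρ r.1 r.2 - Psi ρ r'.1 r'.2) ≤ (K + 1) * dist r r' := by
        have e : Phi ρ (Psi ρ r.1 r.2) - Phi ρ (Psi ρ r'.1 r'.2)
            = (Phi ρ r.1 - Phi ρ r'.1) + (r.2 - r'.2) := by rw [hreq, hreq']; ring
        have h6 := mul_le_mul_of_nonneg_left h4 hK.le
        linarith
      have hk' : k * ((K + 1) / k * dist r r') = (K + 1) * dist r r' := by
        field_simp
      exact (mul_le_mul_iff_right₀ hk).1 (by rw [hk']; exact hd)
  simp only [NNReal.coe_mk, Real.dist_eq, abs_sub_le_iff]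
  refine ⟨key q hqT q' hq'T, ?_⟩
  have := key q' hq'T q hqT
  rwa [dist_comm] at this

end aux

/-- For `ρ ∈ R_c`, the function `Ψ_ρ` is continuous on `D_ρ`, nondecreasing in each
coordinate, and locally Lipschitz continuous on `D_ρ ∩ ((0,∞) × [0,∞))`. -/
theorem stmt_2 (ρ : ℝ → ℝ) (hρc : ContinuousOn ρ (Set.Ici 0)) (hρ0 : ρ 0 = 0)
    (hρpos : ∀ v > (0:ℝ), 0 < ρ v) :
    ContinuousOn (fun q : ℝ × ℝ => Psi ρ q.1 q.2) (Drho ρ) ∧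
    (∀ q ∈ Drho ρ, ∀ r ∈ Drho ρ, q.1 ≤ r.1 → q.2 ≤ r.2 →
      Psi ρ q.1 q.2 ≤ Psi ρ r.1 r.2) ∧
    LocallyLipschitzOn (Drho ρ ∩ Set.Ioi (0:ℝ) ×ˢ Set.Ici (0:ℝ))
      (fun q : ℝ × ℝ => Psi ρ q.1 q.2) :=
  ⟨Psi_continuousOn hρc hρpos, Psi_monoOn hρc hρpos, Psi_locallyLipschitzOn hρc hρpos⟩
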